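/- Let G be a simple graph on Fin k (k ≥ 2) with at least one edge and maximum degree Δ ≥ 1, let P : Fin k → ℝ be a probability vector with P i > 0 and ∑ i, P i = 1, and let G₁, …, G_c be an edge coloring of G: each G_l is a nonempty subgraph of G of maximum degree 1 (a matching), and their edge sets partition the edges of G. For each l let B_{G_l}(P) be the degree-corrected warm-started XY-mixer matrix of the matching G_l (with its own maximum degree Δ(G_l) = 1): B_ii = (P_j − P_i)/(P_i + P_j) if i is matched to j in G_l, B_ii = −1 if i is unmatched in G_l, B_ij = −2√(P_i P_j)/(P_i + P_j) on matched pairs, and 0 otherwise. Then for every β ∈ ℝ and every integer T ≥ 1, the Trotterized evolution fixes v(P) up to the phase e^{iβ}: ∏_{t=1}^{T} ( e^{−iβ(c−Δ)/(TΔ)} · ∏_{l=1}^{c} exp(−i (β/(TΔ)) · B_{G_l}(P)) ) · v(P) = e^{iβ} · v(P), where v(P)_i = √(P_i). -/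

import Mathlib

open Matrix Finset

section
attribute [local instance]
  Matrix.linftyOpNormedAddCommGroup Matrix.linftyOpNormedRing Matrix.linftyOpNormedAlgebra

/-- If `v` is an eigenvector of `M` with eigenvalue `μ`, then it is an eigenvector of
`exp ℂ M` with eigenvalue `exp μ`. -/
lemma exp_mulVec_eig {k : ℕ} (M : Matrix (Fin k) (Fin k) ℂ) (v : Fin k → ℂ) (μ : ℂ)
    (h : M.mulVec v = μ • v) :
    (NormedSpace.exp M).mulVec v = Complex.exp μ • v := by
  have hpow : ∀ n : ℕ, (M ^ n).mulVec v = μ ^ n • v := by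
    intro n
    induction n with
    | zero => simp
    | succ n ih =>
        rw [pow_succ, ← Matrix.mulVec_mulVec, h, Matrix.mulVec_smul, ih,
          smul_smul, pow_succ, mul_comm]
  -- the continuous linear map `A ↦ A.mulVec v`
  let f : Matrix (Fin k) (Fin k) ℂ →ₗ[ℂ] (Fin k → ℂ) :=
    { toFun := fun A => A.mulVec v
      map_add' := fun A B => Matrix.add_mulVec A B v
      map_smul' := fun r A => Matrix.smul_mulVec r A v }
  have hf : Continuous f := f.continuous_of_finiteDimensional
  have h1 : HasSum (fun n : ℕ => ((n.factorial : ℂ)⁻¹ • M ^ n)) (NormedSpace.exp M) :=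
    NormedSpace.exp_series_hasSum_exp' M
  have h2 : HasSum (fun n : ℕ => f ((n.factorial : ℂ)⁻¹ • M ^ n)) (f (NormedSpace.exp M)) :=
    h1.map f hf
  have h3 : HasSum (fun n : ℕ => ((n.factorial : ℂ)⁻¹ * μ ^ n) • v) (f (NormedSpace.exp M)) := by
    refine h2.congr_fun fun n => ?_
    show ((n.factorial : ℂ)⁻¹ * μ ^ n) • v = ((n.factorial : ℂ)⁻¹ • M ^ n).mulVec v
    rw [Matrix.smul_mulVec, hpow, smul_smul]
  have h4 : HasSum (fun n : ℕ => ((n.factorial : ℂ)⁻¹ * μ ^ n) • v) (Complex.exp μ • v) := by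
    have := (NormedSpace.exp_series_hasSum_exp' (𝕂 := ℂ) μ).smul_const v
    rw [Complex.exp_eq_exp_ℂ]
    simpa [smul_eq_mul] using this
  have := h3.unique h4
  simpa [f] using this

end

lemma list_prod_mulVec_eig {k : ℕ} (v : Fin k → ℂ) (a : ℂ)
    (L : List (Matrix (Fin k) (Fin k) ℂ)) (h : ∀ M ∈ L, M.mulVec v = a • v) :
    L.prod.mulVec v = a ^ L.length • v := by
  induction L with
  | nil => simp
  | cons M L ih =>
      rw [List.prod_cons, ← Matrix.mulVec_mulVec, ih (fun N hN => h N (List.mem_cons_of_mem M hN)),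
        Matrix.mulVec_smul, h M (List.mem_cons_self), smul_smul, List.length_cons,
        pow_succ, mul_comm]

lemma pow_mulVec_eig {k : ℕ} (M : Matrix (Fin k) (Fin k) ℂ) (v : Fin k → ℂ) (a : ℂ)
    (h : M.mulVec v = a • v) (T : ℕ) : (M ^ T).mulVec v = a ^ T • v := by
  induction T with
  | zero => simp
  | succ T ih =>
      rw [pow_succ, ← Matrix.mulVec_mulVec, h, Matrix.mulVec_smul, ih, smul_smul,
        pow_succ, mul_comm]

theorem statement19 (k : ℕ) (hk : 2 ≤ k)
    (G : SimpleGraph (Fin k)) [DecidableRel G.Adj]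
    (hedge : ∃ a b : Fin k, G.Adj a b) (hΔ : 1 ≤ G.maxDegree)
    (P : Fin k → ℝ) (hpos : ∀ i, 0 < P i) (hsum : ∑ i, P i = 1)
    (c : ℕ) (Gl : Fin c → SimpleGraph (Fin k)) [∀ l, DecidableRel (Gl l).Adj]
    (hsub : ∀ l, Gl l ≤ G)
    (hne : ∀ l, ∃ a b : Fin k, (Gl l).Adj a b)
    (hmatch : ∀ l i, (Gl l).degree i ≤ 1)
    (hpart : ∀ i j : Fin k, G.Adj i j → ∃! l, (Gl l).Adj i j)
    (B : Fin c → Matrix (Fin k) (Fin k) ℂ)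
    (hB : ∀ l i j, B l i j =
      if i = j then
        ((((∑ j' ∈ (Gl l).neighborFinset i, (P j' - P i) / (P i + P j'))
          + (((Gl l).degree i : ℝ) - 1)) : ℝ) : ℂ)
      else if (Gl l).Adj i j then
        ((-2 * Real.sqrt (P i * P j) / (P i + P j) : ℝ) : ℂ)
      else 0)
    (v : Fin k → ℂ) (hv : ∀ i, v i = ((Real.sqrt (P i) : ℝ) : ℂ)) :
    ∀ (β : ℝ) (T : ℕ), 1 ≤ T →
      ((Complex.exp (-(Complex.I * β) * ((c : ℂ) - (G.maxDegree : ℂ))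
            / ((T : ℂ) * (G.maxDegree : ℂ))) •
        (List.ofFn (fun l : Fin c =>
          NormedSpace.exp
            ((-(Complex.I * ((β / ((T : ℝ) * (G.maxDegree : ℝ))) : ℝ))) • B l))).prod) ^ T).mulVec v
      = Complex.exp (Complex.I * β) • v := by
  -- v is a `-1`-eigenvector of each `B l`
  have heig : ∀ l, (B l).mulVec v = (-1 : ℂ) • v := by
    intro l
    funext i
    have hdeg := hmatch l i
    interval_cases h : (Gl l).degree i
    · -- unmatched: row has only the diagonal entry `-1`
      have hnbr : (Gl l).neighborFinset i = ∅ := by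
        rwa [← Finset.card_eq_zero, ← SimpleGraph.degree]
      have hadj : ∀ j, ¬ (Gl l).Adj i j := by
        intro j hj
        have : j ∈ (Gl l).neighborFinset i := by
          rw [SimpleGraph.mem_neighborFinset]; exact hj
        simp [hnbr] at this
      show ∑ j, B l i j * v j = _
      rw [Fintype.sum_eq_single i (fun j hj => by
        rw [hB l i j, if_neg (Ne.symm hj), if_neg (hadj j)]; ring)]
      rw [hB l i i, if_pos rfl, hnbr]
      simp [h, Pi.smul_apply, smul_eq_mul]
    · -- matched to a unique `j₀`
      obtain ⟨j₀, hj₀⟩ := Finset.card_eq_one.mp h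
      have hadj : (Gl l).Adj i j₀ := by
        rw [← SimpleGraph.mem_neighborFinset, hj₀]; exact Finset.mem_singleton_self j₀
      have hij : i ≠ j₀ := fun hh => (Gl l).loopless.irrefl i (hh ▸ hadj)
      have hnadj : ∀ j, j ≠ i → j ≠ j₀ → ¬ (Gl l).Adj i j := by
        intro j _ hjj hj
        have : j ∈ (Gl l).neighborFinset i := by
          rw [SimpleGraph.mem_neighborFinset]; exact hj
        rw [hj₀, Finset.mem_singleton] at this
        exact hjj this
      show ∑ j, B l i j * v j = _
      rw [Fintype.sum_eq_add i j₀ hij (fun j hj => by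
        rw [hB l i j, if_neg (fun hh => hj.1 hh.symm), if_neg (hnadj j hj.1 hj.2)]; ring)]
      rw [hB l i i, if_pos rfl, hB l i j₀, if_neg hij, if_pos hadj, hj₀, h, hv i, hv j₀]
      have hS : (0 : ℝ) < P i + P j₀ := add_pos (hpos i) (hpos j₀)
      have hSne : ((P i + P j₀ : ℝ) : ℂ) ≠ 0 := by
        exact_mod_cast (ne_of_gt hS)
      have hsqrt : Real.sqrt (P i * P j₀) = Real.sqrt (P i) * Real.sqrt (P j₀) :=
        Real.sqrt_mul (hpos i).le _
      have hsq : Real.sqrt (P j₀) * Real.sqrt (P j₀) = P j₀ :=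
        Real.mul_self_sqrt (hpos j₀).le
      have hsqi : Real.sqrt (P i) * Real.sqrt (P i) = P i :=
        Real.mul_self_sqrt (hpos i).le
      simp only [Finset.sum_singleton, Pi.smul_apply, smul_eq_mul, hsqrt, hv i, Nat.cast_one]
      have key : ((P j₀ - P i) / (P i + P j₀) + ((1 : ℝ) - 1)) * Real.sqrt (P i) +
          -2 * (Real.sqrt (P i) * Real.sqrt (P j₀)) / (P i + P j₀) * Real.sqrt (P j₀)
          = -1 * Real.sqrt (P i) := by
        field_simp
        nlinarith [hsq, hsqi, Real.sqrt_nonneg (P i), Real.sqrt_nonneg (P j₀)]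
      calc (((P j₀ - P i) / (P i + P j₀) + ((1 : ℝ) - 1) : ℝ) : ℂ) * (Real.sqrt (P i) : ℂ) +
          ((-2 * (Real.sqrt (P i) * Real.sqrt (P j₀)) / (P i + P j₀) : ℝ) : ℂ)
            * (Real.sqrt (P j₀) : ℂ)
          = (((((P j₀ - P i) / (P i + P j₀) + ((1 : ℝ) - 1)) * Real.sqrt (P i) +
              -2 * (Real.sqrt (P i) * Real.sqrt (P j₀)) / (P i + P j₀) * Real.sqrt (P j₀)) : ℝ) : ℂ)
            := by push_cast; ring
        _ = ((-1 * Real.sqrt (P i) : ℝ) : ℂ) := by rw [key]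
        _ = -1 * (Real.sqrt (P i) : ℂ) := by push_cast; ring
  intro β T hT
  have hΔ0 : (G.maxDegree : ℝ) ≠ 0 := by
    have : 0 < G.maxDegree := hΔ
    exact_mod_cast this.ne'
  have hT0 : (T : ℝ) ≠ 0 := by
    have : 0 < T := hT
    exact_mod_cast this.ne'
  set r : ℝ := β / ((T : ℝ) * (G.maxDegree : ℝ)) with hr
  -- each exponential factor fixes v up to phase exp(I r)
  have hfac : ∀ l, (NormedSpace.exp ((-(Complex.I * (r : ℂ))) • B l)).mulVec v
      = Complex.exp (Complex.I * (r : ℂ)) • v := by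
    intro l
    have h1 : ((-(Complex.I * (r : ℂ))) • B l).mulVec v = (Complex.I * (r : ℂ)) • v := by
      rw [Matrix.smul_mulVec, heig l, smul_smul]
      ring_nf
    have := exp_mulVec_eig _ v _ h1
    exact this
  have hprod : ((List.ofFn (fun l : Fin c =>
      NormedSpace.exp ((-(Complex.I * (r : ℂ))) • B l))).prod).mulVec v
      = Complex.exp (Complex.I * (r : ℂ)) ^ c • v := by
    have := list_prod_mulVec_eig v (Complex.exp (Complex.I * (r : ℂ)))
      (List.ofFn (fun l : Fin c => NormedSpace.exp ((-(Complex.I * (r : ℂ))) • B l)))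
      (by
        intro M hM
        rw [List.mem_ofFn] at hM
        obtain ⟨l, rfl⟩ := hM
        exact hfac l)
    simpa using this
  have hT0c : (T : ℂ) ≠ 0 := by exact_mod_cast hT0
  have hΔ0c : ((G.maxDegree : ℕ) : ℂ) ≠ 0 := by exact_mod_cast hΔ0
  have hstep : ((Complex.exp (-(Complex.I * β) * ((c : ℂ) - (G.maxDegree : ℂ))
      / ((T : ℂ) * (G.maxDegree : ℂ)))) • (List.ofFn (fun l : Fin c =>
      NormedSpace.exp ((-(Complex.I * (r : ℂ))) • B l))).prod).mulVec v
      = Complex.exp (Complex.I * β / (T : ℂ)) • v := by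
    rw [Matrix.smul_mulVec, hprod, smul_smul, ← Complex.exp_nat_mul, ← Complex.exp_add]
    congr 2
    rw [hr]
    push_cast
    field_simp
    ring
  rw [pow_mulVec_eig _ v _ hstep T, ← Complex.exp_nat_mul]
  congr 2
  field_simp
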